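/- Let τ_W be the topology on 𝓘↗∞(ℤ) generated by the base consisting of all sets U_α(F) = {β ∈ 𝓘↗∞(ℤ) : dom β ⊆ dom α and β(x) = α(x) for all x ∈ F}, where α ∈ 𝓘↗∞(ℤ) and F ranges over the finite subsets of dom α. Then (𝓘↗∞(ℤ), τ_W) is a Tychonoff (completely regular Hausdorff) topological inverse semigroup: the multiplication (α, β) ↦ α·β is jointly continuous and the inversion α ↦ α⁻¹ (the inverse partial bijection) is continuous with respect to τ_W. -/

import Mathlib

/-- A monotone injective partial self-map of `ℤ` with cofinite domain and cofinite range,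
encoded as a function `ℤ → Option ℤ` where `none` means "undefined". -/
structure IsMIP (f : ℤ → Option ℤ) : Prop where
  inj : ∀ ⦃x y a : ℤ⦄, f x = some a → f y = some a → x = y
  mono : ∀ ⦃x y a b : ℤ⦄, f x = some a → f y = some b → x ≤ y → a ≤ b
  cofin_dom : {x : ℤ | f x = none}.Finite
  cofin_ran : {y : ℤ | ∀ x : ℤ, f x ≠ some y}.Finite

/-- The monoid `𝓘↗∞(ℤ)` of monotone injective partial self-maps of `ℤ`
with cofinite domain and cofinite range. -/
def IZ : Type := {f : ℤ → Option ℤ // IsMIP f}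

namespace IZ

/-- Composition of partial maps, written left-to-right: `(pcomp f g) x = g (f x)`. -/
def pcomp (f g : ℤ → Option ℤ) : ℤ → Option ℤ := fun x => (f x).bind g

theorem isMIP_id : IsMIP (fun x : ℤ => some x) := by
  refine ⟨?_, ?_, ?_, ?_⟩
  · intro x y a hx hy; simp_all
  · intro x y a b hx hy h; simp_all
  · simp
  · have : {y : ℤ | ∀ x : ℤ, (fun x : ℤ => some x) x ≠ some y} = ∅ := by
      ext y; simp
    rw [this]; exact Set.finite_empty

theorem isMIP_comp {f g : ℤ → Option ℤ} (hf : IsMIP f) (hg : IsMIP g) :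
    IsMIP (pcomp f g) := by
  refine ⟨?_, ?_, ?_, ?_⟩
  · intro x y a hx hy
    rw [pcomp, Option.bind_eq_some_iff] at hx hy
    obtain ⟨b, hb, hba⟩ := hx
    obtain ⟨c, hc, hca⟩ := hy
    have hbc : b = c := hg.inj hba hca
    subst hbc
    exact hf.inj hb hc
  · intro x y a b hx hy hxy
    rw [pcomp, Option.bind_eq_some_iff] at hx hy
    obtain ⟨p, hp, hpa⟩ := hx
    obtain ⟨q, hq, hqb⟩ := hy
    exact hg.mono hpa hqb (hf.mono hp hq hxy)
  · have hsub : {x : ℤ | pcomp f g x = none} ⊆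
        {x : ℤ | f x = none} ∪ f ⁻¹' (Option.some '' {a : ℤ | g a = none}) := by
      intro x hx
      simp only [Set.mem_setOf_eq, pcomp] at hx
      cases hfx : f x with
      | none => exact Or.inl hfx
      | some a =>
        right
        rw [hfx] at hx
        simp only [Option.bind_some] at hx
        exact ⟨a, hx, hfx.symm⟩
    refine Set.Finite.subset (Set.Finite.union hf.cofin_dom ?_) hsub
    refine Set.Finite.preimage ?_ (hg.cofin_dom.image _)
    intro x hx y hy hxy
    obtain ⟨a, _, ha⟩ := hx
    obtain ⟨b, _, hb⟩ := hy
    have hfa : f x = some a := ha.symm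
    have hfb : f y = some b := hb.symm
    have : some a = some b := by rw [← hfa, ← hfb, hxy]
    rw [Option.some_inj] at this
    subst this
    exact hf.inj hfa hfb
  · have hsub : {y : ℤ | ∀ x : ℤ, pcomp f g x ≠ some y} ⊆
        {y : ℤ | ∀ x : ℤ, g x ≠ some y} ∪
          ((fun a => (g a).getD 0) '' {a : ℤ | ∀ x : ℤ, f x ≠ some a}) := by
      intro y hy
      simp only [Set.mem_setOf_eq] at hy
      by_cases hgy : ∀ a : ℤ, g a ≠ some y
      · exact Or.inl hgy
      · push_neg at hgy
        obtain ⟨a, hga⟩ := hgy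
        right
        refine ⟨a, ?_, by simp [hga]⟩
        intro x hfx
        exact hy x (by simp [pcomp, hfx, hga])
    exact Set.Finite.subset (Set.Finite.union hg.cofin_ran (hf.cofin_ran.image _)) hsub

instance : Monoid IZ where
  one := ⟨fun x => some x, isMIP_id⟩
  mul a b := ⟨pcomp a.1 b.1, isMIP_comp a.2 b.2⟩
  mul_assoc a b c := by
    apply Subtype.ext
    funext x
    exact Option.bind_assoc (a.1 x) b.1 c.1
  one_mul a := by
    apply Subtype.ext
    funext x
    rfl
  mul_one a := by
    apply Subtype.ext
    funext x
    show (a.1 x).bind some = a.1 x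
    cases a.1 x <;> rfl

theorem mul_def (a b : IZ) : (a * b).1 = pcomp a.1 b.1 := rfl

theorem one_def : (1 : IZ).1 = fun x : ℤ => some x := rfl

/-- The domain of an element of `𝓘↗∞(ℤ)`. -/
def dom (a : IZ) : Set ℤ := {x : ℤ | a.1 x ≠ none}

/-- The range of an element of `𝓘↗∞(ℤ)`. -/
def ran (a : IZ) : Set ℤ := {y : ℤ | ∃ x : ℤ, a.1 x = some y}

/-- Basic set of the weak topology. -/
def Ubas (α : IZ) (F : Finset ℤ) : Set IZ :=
  {β : IZ | IZ.dom β ⊆ IZ.dom α ∧ ∀ x ∈ F, β.1 x = α.1 x}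

/-- The generating family for `τ_W`. -/
def gen : Set (Set IZ) :=
  {U : Set IZ | ∃ (α : IZ) (F : Finset ℤ), (∀ x ∈ F, α.1 x ≠ none) ∧ U = Ubas α F}

theorem Ubas_mem_gen {α : IZ} {F : Finset ℤ} (hF : ∀ x ∈ F, α.1 x ≠ none) :
    Ubas α F ∈ gen := ⟨α, F, hF, rfl⟩

theorem self_mem_Ubas (α : IZ) (F : Finset ℤ) : α ∈ Ubas α F :=
  ⟨subset_rfl, fun _ _ => rfl⟩

theorem mem_dom {a : IZ} {x : ℤ} : x ∈ dom a ↔ a.1 x ≠ none := Iff.rfl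

/-- The weak topology `τ_W`. -/
def tauW : TopologicalSpace IZ := TopologicalSpace.generateFrom gen

theorem isOpen_tauW {U : Set IZ} :
    @IsOpen IZ tauW U ↔ TopologicalSpace.GenerateOpen gen U := Iff.rfl

/-- Each generating set has open complement. -/
theorem compl_basic_open (α : IZ) (F : Finset ℤ) (hF : ∀ x ∈ F, α.1 x ≠ none) :
    TopologicalSpace.GenerateOpen gen (Ubas α F)ᶜ := by
  have key : ∀ γ ∈ (Ubas α F)ᶜ, ∃ V, V ∈ gen ∧ γ ∈ V ∧ V ⊆ (Ubas α F)ᶜ := by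
    intro γ hγ
    by_cases hd : dom γ ⊆ dom α
    · have hx : ∃ x ∈ F, γ.1 x ≠ α.1 x := by
        by_contra h
        push_neg at h
        exact hγ ⟨hd, h⟩
      obtain ⟨x, hxF, hxne⟩ := hx
      cases hgx : γ.1 x with
      | none =>
        refine ⟨Ubas γ ∅, Ubas_mem_gen (by simp), self_mem_Ubas γ ∅, ?_⟩
        intro δ hδ hδmem
        have h1 : δ.1 x = α.1 x := hδmem.2 x hxF
        have h2 : x ∈ dom δ := by rw [mem_dom, h1]; exact hF x hxF
        have h3 : x ∈ dom γ := hδ.1 h2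
        exact h3 hgx
      | some c =>
        refine ⟨Ubas γ {x}, Ubas_mem_gen (by simp [hgx]), self_mem_Ubas γ _, ?_⟩
        intro δ hδ hδmem
        have h1 : δ.1 x = γ.1 x := hδ.2 x (Finset.mem_singleton_self x)
        have h2 : δ.1 x = α.1 x := hδmem.2 x hxF
        exact hxne (h1 ▸ h2)
    · obtain ⟨x, hxγ, hxα⟩ : ∃ x, x ∈ dom γ ∧ x ∉ dom α := by
        rw [Set.not_subset] at hd
        obtain ⟨x, h1, h2⟩ := hd
        exact ⟨x, h1, h2⟩
      refine ⟨Ubas γ {x}, Ubas_mem_gen (by simpa [mem_dom] using hxγ), self_mem_Ubas γ _, ?_⟩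
      intro δ hδ hδmem
      have h1 : δ.1 x = γ.1 x := hδ.2 x (Finset.mem_singleton_self x)
      have h2 : x ∈ dom δ := by rwa [mem_dom, h1]
      exact hxα (hδmem.1 h2)
  have heq : (Ubas α F)ᶜ = ⋃₀ {V | V ∈ gen ∧ V ⊆ (Ubas α F)ᶜ} := by
    apply Set.Subset.antisymm
    · intro γ hγ
      obtain ⟨V, h1, h2, h3⟩ := key γ hγ
      exact ⟨V, ⟨h1, h3⟩, h2⟩
    · rintro γ ⟨V, ⟨_, hsub⟩, hγ⟩
      exact hsub hγ
  rw [heq]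
  exact .sUnion _ fun V hV => .basic _ hV.1

theorem compl_gen_open {U : Set IZ} (hU : U ∈ gen) :
    TopologicalSpace.GenerateOpen gen Uᶜ := by
  obtain ⟨α, F, hF, rfl⟩ := hU
  exact compl_basic_open α F hF

theorem empty_gen_open : TopologicalSpace.GenerateOpen gen (∅ : Set IZ) := by
  have : (∅ : Set IZ) = ⋃₀ (∅ : Set (Set IZ)) := by simp
  rw [this]; exact .sUnion _ (by simp)

/-- Zero-dimensionality: every open set is a union of clopen sets. -/
theorem exists_clopen_nhd {O : Set IZ} (hO : TopologicalSpace.GenerateOpen gen O) :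
    ∀ γ ∈ O, ∃ U : Set IZ, γ ∈ U ∧ U ⊆ O ∧
      TopologicalSpace.GenerateOpen gen U ∧ TopologicalSpace.GenerateOpen gen Uᶜ := by
  induction hO with
  | basic U hU => exact fun γ hγ => ⟨U, hγ, subset_rfl, .basic _ hU, compl_gen_open hU⟩
  | univ =>
    exact fun γ _ => ⟨Set.univ, trivial, subset_rfl, .univ, by
      rw [Set.compl_univ]; exact empty_gen_open⟩
  | inter O₁ O₂ h₁ h₂ ih₁ ih₂ =>
    rintro γ ⟨hγ₁, hγ₂⟩
    obtain ⟨U₁, m₁, s₁, o₁, c₁⟩ := ih₁ γ hγ₁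
    obtain ⟨U₂, m₂, s₂, o₂, c₂⟩ := ih₂ γ hγ₂
    refine ⟨U₁ ∩ U₂, ⟨m₁, m₂⟩, Set.inter_subset_inter s₁ s₂, .inter _ _ o₁ o₂, ?_⟩
    rw [Set.compl_inter]
    have : U₁ᶜ ∪ U₂ᶜ = ⋃₀ {U₁ᶜ, U₂ᶜ} := by simp
    rw [this]
    exact .sUnion _ (by rintro V (rfl | rfl) <;> assumption)
  | sUnion S hS ih =>
    rintro γ ⟨s, hs, hγs⟩
    obtain ⟨U, m, sub, o, c⟩ := ih s hs γ hγs
    exact ⟨U, m, sub.trans (Set.subset_sUnion_of_mem hs), o, c⟩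

/-- Separation helper: when `a x = none` and `b x = some c`. -/
theorem sep_none_some {a b : IZ} {x c : ℤ} (hax : a.1 x = none) (hbx : b.1 x = some c) :
    ∃ u v : Set IZ, TopologicalSpace.GenerateOpen gen u ∧ TopologicalSpace.GenerateOpen gen v ∧
      a ∈ u ∧ b ∈ v ∧ Disjoint u v := by
  refine ⟨Ubas a ∅, Ubas b {x}, .basic _ (Ubas_mem_gen (by simp)),
    .basic _ (Ubas_mem_gen (by simp [hbx])), self_mem_Ubas a ∅, self_mem_Ubas b _, ?_⟩
  rw [Set.disjoint_left]
  intro γ hγa hγb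
  have h1 : γ.1 x = b.1 x := hγb.2 x (Finset.mem_singleton_self x)
  have h2 : x ∈ dom γ := by rw [mem_dom, h1, hbx]; simp
  exact (hγa.1 h2) hax

theorem t2_tauW : @T2Space IZ tauW := by
  letI := tauW
  constructor
  intro a b hab
  have hne : ∃ x, a.1 x ≠ b.1 x := by
    by_contra h; push_neg at h; exact hab (Subtype.ext (funext h))
  obtain ⟨x, hx⟩ := hne
  cases hax : a.1 x with
  | none =>
    cases hbx : b.1 x with
    | none => exact absurd (hax.trans hbx.symm) hx
    | some c => exact sep_none_some hax hbx
  | some c =>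
    cases hbx : b.1 x with
    | none =>
      obtain ⟨u, v, hu, hv, hbu, hav, hd⟩ := sep_none_some hbx hax
      exact ⟨v, u, hv, hu, hav, hbu, hd.symm⟩
    | some d =>
      refine ⟨Ubas a {x}, Ubas b {x}, .basic _ (Ubas_mem_gen (by simp [hax])),
        .basic _ (Ubas_mem_gen (by simp [hbx])), self_mem_Ubas a _, self_mem_Ubas b _, ?_⟩
      rw [Set.disjoint_left]
      intro γ hγa hγb
      have h1 : γ.1 x = a.1 x := hγa.2 x (Finset.mem_singleton_self x)
      have h2 : γ.1 x = b.1 x := hγb.2 x (Finset.mem_singleton_self x)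
      exact hx (h1 ▸ h2)

theorem creg_tauW : @CompletelyRegularSpace IZ tauW := by
  letI := tauW
  constructor
  intro x K hK hxK
  have hKc : TopologicalSpace.GenerateOpen gen Kᶜ := hK.isOpen_compl
  obtain ⟨U, hxU, hUK, hUo, hUc⟩ := exists_clopen_nhd hKc x hxK
  have hUopen : IsOpen U := hUo
  have hUclosed : IsClosed U := ⟨hUc⟩
  have hclopen : IsClopen U := ⟨hUclosed, hUopen⟩
  classical
  refine ⟨fun z => if z ∈ U then 0 else 1, ?_, by simp [hxU], ?_⟩
  · apply Continuous.if ?_ continuous_const continuous_const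
    intro a ha
    have : frontier {z : IZ | z ∈ U} = (∅ : Set IZ) := hclopen.frontier_eq
    rw [this] at ha
    exact absurd ha (Set.notMem_empty a)
  · intro z hz
    have hzU : z ∉ U := fun h => hUK h hz
    simp [hzU]

theorem mul_apply (a b : IZ) (x : ℤ) : (a * b).1 x = (a.1 x).bind b.1 := rfl

theorem cont_mul_tauW :
    @Continuous (IZ × IZ) IZ (@instTopologicalSpaceProd IZ IZ tauW tauW) tauW
      (fun p => p.1 * p.2) := by
  letI := tauW
  refine continuous_generateFrom_iff.mpr ?_
  intro U hU
  obtain ⟨μ, F, hF, rfl⟩ := hU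
  rw [isOpen_iff_forall_mem_open]
  rintro ⟨α, β⟩ hp
  obtain ⟨hdom, hval⟩ : α * β ∈ Ubas μ F := hp
  classical
  set F₁ : Finset ℤ := F ∪ (μ.2.cofin_dom.toFinset.filter fun x => α.1 x ≠ none) with hF₁
  set F₂ : Finset ℤ := F.image (fun x => (α.1 x).getD 0) with hF₂
  have hmulF : ∀ x ∈ F, (α * β).1 x ≠ none := by
    intro x hx
    rw [hval x hx]; exact hF x hx
  have hαF : ∀ x ∈ F, α.1 x ≠ none := by
    intro x hx h
    exact hmulF x hx (by rw [mul_apply, h]; rfl)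
  have hF₁dom : ∀ x ∈ F₁, α.1 x ≠ none := by
    intro x hx
    rw [hF₁, Finset.mem_union] at hx
    rcases hx with hx | hx
    · exact hαF x hx
    · exact (Finset.mem_filter.mp hx).2
  have hF₂dom : ∀ y ∈ F₂, β.1 y ≠ none := by
    intro y hy
    rw [hF₂, Finset.mem_image] at hy
    obtain ⟨x, hxF, rfl⟩ := hy
    obtain ⟨a, ha⟩ := Option.ne_none_iff_exists'.mp (hαF x hxF)
    rw [ha]
    intro h
    apply hmulF x hxF
    rw [mul_apply, ha, Option.bind_some]
    simpa using h
  refine ⟨Ubas α F₁ ×ˢ Ubas β F₂, ?_, IsOpen.prod (.basic _ (Ubas_mem_gen hF₁dom))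
    (.basic _ (Ubas_mem_gen hF₂dom)), ⟨self_mem_Ubas α F₁, self_mem_Ubas β F₂⟩⟩
  rintro ⟨α', β'⟩ ⟨hα', hβ'⟩
  show α' * β' ∈ Ubas μ F
  constructor
  · -- dom (α' * β') ⊆ dom μ
    intro x hx
    rw [mem_dom, mul_apply] at hx
    obtain ⟨a', ha'⟩ : ∃ a', α'.1 x = some a' := by
      cases h : α'.1 x with
      | none => exact absurd (by rw [h]; rfl) hx
      | some a => exact ⟨a, rfl⟩
    have hb' : β'.1 a' ≠ none := by
      rw [ha', Option.bind_some] at hx; exact hx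
    rw [mem_dom]
    by_contra hμx
    have hαx : α.1 x ≠ none := by
      intro h
      have : x ∈ dom α := hα'.1 (by rw [mem_dom, ha']; simp)
      exact this h
    have hxF₁ : x ∈ F₁ := by
      rw [hF₁, Finset.mem_union]
      right
      rw [Finset.mem_filter, Set.Finite.mem_toFinset]
      exact ⟨hμx, hαx⟩
    have heq : α.1 x = some a' := by rw [← hα'.2 x hxF₁, ha']
    have hmul_none : (α * β).1 x = none := by
      by_contra h
      exact (hdom h) hμx
    rw [mul_apply, heq, Option.bind_some] at hmul_none
    have : β'.1 a' = none := by
      by_contra h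
      exact (hβ'.1 h) hmul_none
    exact hb' this
  · intro x hxF
    obtain ⟨a, ha⟩ := Option.ne_none_iff_exists'.mp (hαF x hxF)
    have ha' : α'.1 x = some a := by
      rw [hα'.2 x (by rw [hF₁, Finset.mem_union]; exact Or.inl hxF), ha]
    have haF₂ : a ∈ F₂ := by
      rw [hF₂, Finset.mem_image]
      exact ⟨x, hxF, by rw [ha]; rfl⟩
    have hβeq : β'.1 a = β.1 a := hβ'.2 a haF₂
    rw [mul_apply, ha', Option.bind_some, hβeq, ← hval x hxF, mul_apply, ha,
      Option.bind_some]

open Classical in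
/-- The inverse partial bijection, as a raw function. -/
noncomputable def pinv (a : IZ) : ℤ → Option ℤ := fun y =>
  if h : ∃ x, a.1 x = some y then some h.choose else none

theorem pinv_eq_some {a : IZ} {y x : ℤ} : pinv a y = some x ↔ a.1 x = some y := by
  constructor
  · intro h
    rw [pinv] at h
    split at h
    · rename_i hex
      have hs := hex.choose_spec
      rw [Option.some_inj] at h
      rwa [h] at hs
    · exact absurd h (by simp)
  · intro h
    rw [pinv, dif_pos ⟨x, h⟩]
    rw [Option.some_inj]
    exact a.2.inj (Exists.choose_spec (⟨x, h⟩ : ∃ x, a.1 x = some y)) h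

theorem pinv_eq_none {a : IZ} {y : ℤ} : pinv a y = none ↔ ∀ x, a.1 x ≠ some y := by
  constructor
  · intro h x hx
    rw [pinv, dif_pos ⟨x, hx⟩] at h
    exact Option.some_ne_none _ h
  · intro h
    rw [pinv, dif_neg (not_exists.mpr h)]

theorem isMIP_pinv (a : IZ) : IsMIP (pinv a) := by
  refine ⟨?_, ?_, ?_, ?_⟩
  · intro y y' x hy hy'
    have h1 := pinv_eq_some.mp hy
    have h2 := pinv_eq_some.mp hy'
    rw [h1] at h2
    exact Option.some_inj.mp h2
  · intro y y' x x' hy hy' hle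
    have h1 := pinv_eq_some.mp hy
    have h2 := pinv_eq_some.mp hy'
    by_contra h
    push_neg at h
    have hle' : x' ≤ x := le_of_lt h
    have : y' ≤ y := a.2.mono h2 h1 hle'
    have hyy : y = y' := le_antisymm hle this
    subst hyy
    have : x = x' := a.2.inj h1 h2
    omega
  · have : {y : ℤ | pinv a y = none} = {y : ℤ | ∀ x, a.1 x ≠ some y} := by
      ext y; exact pinv_eq_none
    rw [this]; exact a.2.cofin_ran
  · have : {x : ℤ | ∀ y, pinv a y ≠ some x} = {x : ℤ | a.1 x = none} := by
      ext x
      simp only [Set.mem_setOf_eq]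
      constructor
      · intro h
        cases hax : a.1 x with
        | none => rfl
        | some y => exact absurd (pinv_eq_some.mpr hax) (h y)
      · intro h y hy
        rw [pinv_eq_some.mp hy] at h
        exact Option.some_ne_none _ h
    rw [this]; exact a.2.cofin_dom

/-- The inversion map of the inverse monoid `𝓘↗∞(ℤ)`. -/
noncomputable def IZinv (a : IZ) : IZ := ⟨pinv a, isMIP_pinv a⟩

theorem mul_IZinv_mul (a : IZ) : a * IZinv a * a = a := by
  apply Subtype.ext; funext x
  show ((a.1 x).bind (pinv a)).bind a.1 = a.1 x
  cases h : a.1 x with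
  | none => rfl
  | some y => rw [Option.bind_some, pinv_eq_some.mpr h, Option.bind_some, h]

theorem IZinv_mul_IZinv (a : IZ) : IZinv a * a * IZinv a = IZinv a := by
  apply Subtype.ext; funext y
  show ((pinv a y).bind a.1).bind (pinv a) = pinv a y
  cases h : pinv a y with
  | none => rfl
  | some x =>
    rw [Option.bind_some, pinv_eq_some.mp h, Option.bind_some, h]

/-- For `y` outside the range of `a`, there is a "gap" in the domain of `a`
pinning `y` outside the range of any restriction. -/
theorem exists_gap (a : IZ) {y : ℤ} (hy : ∀ x, a.1 x ≠ some y) :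
    ∃ x₁ x₂ : ℤ, x₁ < x₂ ∧ (∃ a₁, a.1 x₁ = some a₁ ∧ a₁ < y) ∧
      (∃ a₂, a.1 x₂ = some a₂ ∧ y < a₂) ∧ ∀ x, x₁ < x → x < x₂ → a.1 x = none := by
  have hbelow : ∃ x b, a.1 x = some b ∧ b < y := by
    have hinf : (Set.Iio y \ {b : ℤ | ∀ x, a.1 x ≠ some b}).Infinite :=
      (Set.Iio_infinite y).diff a.2.cofin_ran
    obtain ⟨b, hb1, hb2⟩ := hinf.nonempty
    simp only [Set.mem_setOf_eq, not_forall, not_not] at hb2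
    obtain ⟨x, hx⟩ := hb2
    exact ⟨x, b, hx, hb1⟩
  have habove : ∃ x c, a.1 x = some c ∧ y < c := by
    have hinf : (Set.Ioi y \ {b : ℤ | ∀ x, a.1 x ≠ some b}).Infinite :=
      (Set.Ioi_infinite y).diff a.2.cofin_ran
    obtain ⟨c, hc1, hc2⟩ := hinf.nonempty
    simp only [Set.mem_setOf_eq, not_forall, not_not] at hc2
    obtain ⟨x, hx⟩ := hc2
    exact ⟨x, c, hx, hc1⟩
  obtain ⟨xb, b, hb, hby⟩ := hbelow
  obtain ⟨xc, c, hc, hyc⟩ := habove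
  have hTbdd : ∀ z : ℤ, (∃ d, a.1 z = some d ∧ d < y) → z < xc := by
    rintro z ⟨d, hd, hdy⟩
    by_contra h
    push_neg at h
    have := a.2.mono hc hd h
    omega
  obtain ⟨x₁, ⟨a₁, ha₁, ha₁y⟩, hmax⟩ :=
    Int.exists_greatest_of_bdd (P := fun z => ∃ d, a.1 z = some d ∧ d < y)
      ⟨xc, fun z hz => le_of_lt (hTbdd z hz)⟩ ⟨xb, b, hb, hby⟩
  have hxc : x₁ < xc := hTbdd x₁ ⟨a₁, ha₁, ha₁y⟩
  obtain ⟨x₂, ⟨hx₂gt, hx₂dom⟩, hmin⟩ :=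
    Int.exists_least_of_bdd (P := fun z => x₁ < z ∧ a.1 z ≠ none)
      ⟨x₁ + 1, fun z hz => by omega⟩
      ⟨xc, hxc, by rw [hc]; simp⟩
  obtain ⟨a₂, ha₂⟩ := Option.ne_none_iff_exists'.mp hx₂dom
  have ha₂y : y < a₂ := by
    have hnot : ¬ (∃ d, a.1 x₂ = some d ∧ d < y) := by
      intro hmem
      have := hmax x₂ hmem
      omega
    have h1 : ¬ a₂ < y := fun h => hnot ⟨a₂, ha₂, h⟩
    have hne : a₂ ≠ y := fun h => hy x₂ (by rw [ha₂, h])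
    omega
  refine ⟨x₁, x₂, hx₂gt, ⟨a₁, ha₁, ha₁y⟩, ⟨a₂, ha₂, ha₂y⟩, ?_⟩
  intro x h1 h2
  by_contra h
  have := hmin x ⟨h1, h⟩
  omega

theorem cont_inv_tauW : @Continuous IZ IZ tauW tauW IZinv := by
  letI := tauW
  refine continuous_generateFrom_iff.mpr ?_
  intro U hU
  obtain ⟨μ, F, hF, rfl⟩ := hU
  rw [isOpen_iff_forall_mem_open]
  intro α hα
  obtain ⟨hdom, hval⟩ : IZinv α ∈ Ubas μ F := hα
  classical
  have hnotran : ∀ y, μ.1 y = none → ∀ x, α.1 x ≠ some y := by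
    intro y hy x hx
    have hmem : y ∈ dom (IZinv α) := by
      rw [mem_dom]
      show pinv α y ≠ none
      rw [pinv_eq_some.mpr hx]
      simp
    exact (hdom hmem) hy
  choose! x₁ x₂ hlt h1 h2 hgap using fun y (hy : μ.1 y = none) =>
    exists_gap α (hnotran y hy)
  set D : Finset ℤ := μ.2.cofin_dom.toFinset with hD
  set G : Finset ℤ := F.image (fun y => (μ.1 y).getD 0) ∪
    D.biUnion (fun y => {x₁ y, x₂ y}) with hG
  have hμsome : ∀ y ∈ F, ∃ c, μ.1 y = some c ∧ α.1 c = some y := by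
    intro y hyF
    obtain ⟨c, hc⟩ := Option.ne_none_iff_exists'.mp (hF y hyF)
    have h' : pinv α y = some c := by
      have h2 := hval y hyF
      rw [hc] at h2
      exact h2
    exact ⟨c, hc, pinv_eq_some.mp h'⟩
  have hGdom : ∀ x ∈ G, α.1 x ≠ none := by
    intro x hx
    rw [hG, Finset.mem_union] at hx
    rcases hx with hx | hx
    · rw [Finset.mem_image] at hx
      obtain ⟨y, hyF, rfl⟩ := hx
      obtain ⟨c, hc, hac⟩ := hμsome y hyF
      rw [hc]
      simp only [Option.getD_some]
      rw [hac]; simp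
    · rw [Finset.mem_biUnion] at hx
      obtain ⟨y, hyD, hxmem⟩ := hx
      have hyn : μ.1 y = none := by rwa [hD, Set.Finite.mem_toFinset] at hyD
      rw [Finset.mem_insert, Finset.mem_singleton] at hxmem
      rcases hxmem with rfl | rfl
      · obtain ⟨a₁, ha₁, _⟩ := h1 y hyn
        rw [ha₁]; simp
      · obtain ⟨a₂, ha₂, _⟩ := h2 y hyn
        rw [ha₂]; simp
  refine ⟨Ubas α G, ?_, .basic _ (Ubas_mem_gen hGdom), self_mem_Ubas α G⟩
  intro α' hα'
  show IZinv α' ∈ Ubas μ F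
  have hGval : ∀ x ∈ G, α'.1 x = α.1 x := hα'.2
  constructor
  · -- dom (IZinv α') ⊆ dom μ
    intro y hy
    rw [mem_dom] at hy ⊢
    have hex : ∃ x', α'.1 x' = some y := by
      by_contra h
      push_neg at h
      exact hy (pinv_eq_none.mpr h)
    obtain ⟨x', hx'⟩ := hex
    by_contra hμy
    have hyD : y ∈ D := by rw [hD, Set.Finite.mem_toFinset]; exact hμy
    obtain ⟨a₁, ha₁, ha₁y⟩ := h1 y hμy
    obtain ⟨a₂, ha₂, ha₂y⟩ := h2 y hμy
    have hx₁G : x₁ y ∈ G := by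
      rw [hG, Finset.mem_union]
      right
      rw [Finset.mem_biUnion]
      exact ⟨y, hyD, by simp⟩
    have hx₂G : x₂ y ∈ G := by
      rw [hG, Finset.mem_union]
      right
      rw [Finset.mem_biUnion]
      exact ⟨y, hyD, by simp⟩
    have ha₁' : α'.1 (x₁ y) = some a₁ := by rw [hGval _ hx₁G, ha₁]
    have ha₂' : α'.1 (x₂ y) = some a₂ := by rw [hGval _ hx₂G, ha₂]
    rcases le_or_gt x' (x₁ y) with hle | hgt
    · have := α'.2.mono hx' ha₁' hle
      omega
    rcases le_or_gt (x₂ y) x' with hle | hlt'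
    · have := α'.2.mono ha₂' hx' hle
      omega
    have hnone : α.1 x' = none := hgap y hμy x' hgt hlt'
    have : x' ∈ dom α := hα'.1 (by rw [mem_dom, hx']; simp)
    exact this hnone
  · -- values on F
    intro y hyF
    obtain ⟨c, hc, hac⟩ := hμsome y hyF
    have hcG : c ∈ G := by
      rw [hG, Finset.mem_union]
      left
      rw [Finset.mem_image]
      exact ⟨y, hyF, by rw [hc]; rfl⟩
    have : α'.1 c = some y := by rw [hGval _ hcG, hac]
    show pinv α' y = μ.1 y
    rw [pinv_eq_some.mpr this, hc]

end IZ

/-- The topology `τ_W` on `𝓘↗∞(ℤ)` generated by the base of all sets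
`U_α(F) = {β : dom β ⊆ dom α ∧ β x = α x for all x ∈ F}` (`F` a finite subset of `dom α`)
makes `𝓘↗∞(ℤ)` a Tychonoff (completely regular Hausdorff) topological inverse semigroup:
multiplication is jointly continuous and the inversion `α ↦ α⁻¹` (characterized by
`α * α⁻¹ * α = α` and `α⁻¹ * α * α⁻¹ = α⁻¹`) is continuous. -/
theorem statement19 :
    let τW : TopologicalSpace IZ := TopologicalSpace.generateFrom
      {U : Set IZ | ∃ (α : IZ) (F : Finset ℤ), (∀ x ∈ F, α.1 x ≠ none) ∧
        U = {β : IZ | IZ.dom β ⊆ IZ.dom α ∧ ∀ x ∈ F, β.1 x = α.1 x}}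
    @T2Space IZ τW ∧
    @CompletelyRegularSpace IZ τW ∧
    @Continuous (IZ × IZ) IZ (@instTopologicalSpaceProd IZ IZ τW τW) τW
      (fun p => p.1 * p.2) ∧
    ∃ inv : IZ → IZ,
      (∀ α : IZ, α * inv α * α = α ∧ inv α * α * inv α = inv α) ∧
      @Continuous IZ IZ τW τW inv := by
  intro τW
  exact ⟨IZ.t2_tauW, IZ.creg_tauW, IZ.cont_mul_tauW, IZ.IZinv,
    fun a => ⟨IZ.mul_IZinv_mul a, IZ.IZinv_mul_IZinv a⟩, IZ.cont_inv_tauW⟩
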